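/- There exists a dimension group G with order-unit u such that the index of u in the positive cone G⁺ equals 2 and G is not lattice-ordered. Concretely, let G be the group of all sequences x : ℕ → ℤ such that x_n = x_0 + x_1 for all sufficiently large n, ordered componentwise; then G is a dimension group, the element u with u_0 = u_1 = 1, u_n = 2 for n ≥ 2 is an order-unit of index 2, and the pair a, b ∈ G⁺ with a_0 = b_1 = 1, a_1 = b_0 = 0, a_n = b_n = 1 for n ≥ 2 has no infimum in G. -/
import Mathlib


/-- Membership in the group `G`: sequences eventually equal to `x 0 + x 1`. -/
def memG (x : ℕ → ℤ) : Prop := ∃ N : ℕ, ∀ n ≥ N, x n = x 0 + x 1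

/-- The element `a`. -/
def aSeq : ℕ → ℤ := fun n => if n = 0 then 1 else if n = 1 then 0 else 1

/-- The element `b`. -/
def bSeq : ℕ → ℤ := fun n => if n = 0 then 0 else if n = 1 then 1 else 1

/-- The order-unit `u = a + b`. -/
def uSeq : ℕ → ℤ := aSeq + bSeq

lemma uSeq_apply (n : ℕ) : uSeq n = if n ≤ 1 then 1 else 2 := by
  rcases n with _ | _ | n <;> simp [uSeq, aSeq, bSeq]

lemma uSeq_pos (n : ℕ) : 1 ≤ uSeq n := by
  rw [uSeq_apply]; split <;> norm_num

lemma interp (a₀ a₁ b₀ b₁ : ℕ → ℤ) (ha₀ : memG a₀) (ha₁ : memG a₁)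
    (hb₀ : memG b₀) (hb₁ : memG b₁)
    (h00 : a₀ ≤ b₀) (h01 : a₀ ≤ b₁) (h10 : a₁ ≤ b₀) (h11 : a₁ ≤ b₁) :
    ∃ x, memG x ∧ a₀ ≤ x ∧ a₁ ≤ x ∧ x ≤ b₀ ∧ x ≤ b₁ := by
  obtain ⟨N₀, hN₀⟩ := ha₀
  obtain ⟨N₁, hN₁⟩ := ha₁
  obtain ⟨M₀, hM₀⟩ := hb₀
  obtain ⟨M₁, hM₁⟩ := hb₁
  set N := max (max N₀ N₁) (max M₀ M₁) + 2 with hNdef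
  refine ⟨fun n => if n < N then max (a₀ n) (a₁ n) else max (a₀ 0) (a₁ 0) + max (a₀ 1) (a₁ 1),
    ?_, ?_, ?_, ?_, ?_⟩
  · refine ⟨N, fun n hn => ?_⟩
    have h0 : (0 : ℕ) < N := by omega
    have h1 : (1 : ℕ) < N := by omega
    simp only [if_neg (by omega : ¬ n < N), if_pos h0, if_pos h1]
  · intro n
    by_cases h : n < N
    · simp only [if_pos h]; exact le_max_left _ _
    · simp only [if_neg h]
      have : a₀ n = a₀ 0 + a₀ 1 := hN₀ n (by omega)
      rw [this]
      exact add_le_add (le_max_left _ _) (le_max_left _ _)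
  · intro n
    by_cases h : n < N
    · simp only [if_pos h]; exact le_max_right _ _
    · simp only [if_neg h]
      have : a₁ n = a₁ 0 + a₁ 1 := hN₁ n (by omega)
      rw [this]
      exact add_le_add (le_max_right _ _) (le_max_right _ _)
  · intro n
    by_cases h : n < N
    · simp only [if_pos h]; exact max_le (h00 n) (h10 n)
    · simp only [if_neg h]
      have : b₀ n = b₀ 0 + b₀ 1 := hM₀ n (by omega)
      rw [this]
      exact add_le_add (max_le (h00 0) (h10 0)) (max_le (h00 1) (h10 1))
  · intro n
    by_cases h : n < N
    · simp only [if_pos h]; exact max_le (h01 n) (h11 n)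
    · simp only [if_neg h]
      have : b₁ n = b₁ 0 + b₁ 1 := hM₁ n (by omega)
      rw [this]
      exact add_le_add (max_le (h01 0) (h11 0)) (max_le (h01 1) (h11 1))

lemma directed' (x y : ℕ → ℤ) (hx : memG x) (hy : memG y) :
    ∃ z, memG z ∧ x ≤ z ∧ y ≤ z := by
  obtain ⟨N₀, hN₀⟩ := hx
  obtain ⟨N₁, hN₁⟩ := hy
  set N := max N₀ N₁ + 2 with hNdef
  refine ⟨fun n => if n < N then max (x n) (y n) else max (x 0) (y 0) + max (x 1) (y 1),
    ⟨N, fun n hn => ?_⟩, fun n => ?_, fun n => ?_⟩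
  · simp only [if_neg (by omega : ¬ n < N), if_pos (by omega : (0:ℕ) < N),
      if_pos (by omega : (1:ℕ) < N)]
  · by_cases h : n < N
    · simp only [if_pos h]; exact le_max_left _ _
    · simp only [if_neg h]
      rw [hN₀ n (by omega)]
      exact add_le_add (le_max_left _ _) (le_max_left _ _)
  · by_cases h : n < N
    · simp only [if_pos h]; exact le_max_right _ _
    · simp only [if_neg h]
      rw [hN₁ n (by omega)]
      exact add_le_add (le_max_right _ _) (le_max_right _ _)


theorem stmt11 :
    -- `G` is a subgroup of `ℕ → ℤ`
    (memG 0 ∧ (∀ x y, memG x → memG y → memG (x + y)) ∧ (∀ x, memG x → memG (-x))) ∧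
    -- `G` is directed
    (∀ x y, memG x → memG y → ∃ z, memG z ∧ x ≤ z ∧ y ≤ z) ∧
    -- `G` is unperforated
    (∀ m : ℕ, 0 < m → ∀ x, memG x → 0 ≤ m • x → 0 ≤ x) ∧
    -- `G` has interpolation
    (∀ a₀ a₁ b₀ b₁, memG a₀ → memG a₁ → memG b₀ → memG b₁ →
      a₀ ≤ b₀ → a₀ ≤ b₁ → a₁ ≤ b₀ → a₁ ≤ b₁ →
      ∃ x, memG x ∧ a₀ ≤ x ∧ a₁ ≤ x ∧ x ≤ b₀ ∧ x ≤ b₁) ∧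
    -- `u` is an order-unit of `G`
    (memG uSeq ∧ 0 ≤ uSeq ∧ ∀ x, memG x → ∃ n : ℕ, x ≤ n • uSeq) ∧
    -- the index of `u` in `G⁺` is `2`
    (∀ n : ℕ, (∃ y, memG y ∧ 0 ≤ y ∧ y ≠ 0 ∧ n • y ≤ uSeq) ↔ n ≤ 2) ∧
    -- `a` and `b` lie in `G⁺` and have no infimum in `G`
    (memG aSeq ∧ memG bSeq ∧ 0 ≤ aSeq ∧ 0 ≤ bSeq ∧
      ¬∃ z, memG z ∧ z ≤ aSeq ∧ z ≤ bSeq ∧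
        ∀ w, memG w → w ≤ aSeq → w ≤ bSeq → w ≤ z) := by
  refine ⟨⟨⟨0, fun n _ => by simp⟩, ?_, ?_⟩, directed', ?_, interp, ?_, ?_, ?_⟩
  · rintro x y ⟨N, hN⟩ ⟨M, hM⟩
    refine ⟨max N M, fun n hn => ?_⟩
    simp only [Pi.add_apply, hN n (le_trans (le_max_left _ _) hn),
      hM n (le_trans (le_max_right _ _) hn)]
    ring
  · rintro x ⟨N, hN⟩
    exact ⟨N, fun n hn => by simp [hN n hn]; ring⟩
  · intro m hm x _ h
    intro n
    have := h n
    simp only [Pi.smul_apply, Pi.zero_apply, nsmul_eq_mul] at this ⊢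
    nlinarith [this, (by exact_mod_cast hm : (1:ℤ) ≤ m)]
  · -- u is order-unit
    refine ⟨⟨2, fun n hn => ?_⟩, fun n => ?_, ?_⟩
    · rw [uSeq_apply, uSeq_apply 0, uSeq_apply 1]
      simp [show ¬ n ≤ 1 by omega]
    · exact le_trans zero_le_one (uSeq_pos n)
    · rintro x ⟨N, hN⟩
      refine ⟨(x 0 + x 1).toNat ⊔ (Finset.range (N+1)).sup (fun k => (x k).toNat), fun k => ?_⟩
      simp only [Pi.smul_apply, nsmul_eq_mul]
      have hu := uSeq_pos k
      set n : ℕ := (x 0 + x 1).toNat ⊔ (Finset.range (N+1)).sup (fun k => (x k).toNat) with hn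
      have hxk : x k ≤ (n : ℤ) := by
        by_cases hk : k ≤ N
        · calc x k ≤ ((x k).toNat : ℤ) := Int.self_le_toNat _
            _ ≤ n := by
              exact_mod_cast Nat.cast_le.mpr (le_trans (Finset.le_sup (f := fun k => (x k).toNat)
                (Finset.mem_range.mpr (by omega))) (le_max_right _ _))
        · rw [hN k (by omega)]
          calc x 0 + x 1 ≤ ((x 0 + x 1).toNat : ℤ) := Int.self_le_toNat _
            _ ≤ n := by exact_mod_cast Nat.cast_le.mpr (le_max_left _ _)
      calc x k ≤ (n : ℤ) := hxk
        _ = (n : ℤ) * 1 := by ring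
        _ ≤ (n : ℤ) * uSeq k := by
            exact mul_le_mul_of_nonneg_left hu (Int.ofNat_nonneg n)
  · -- index = 2
    intro n
    constructor
    · rintro ⟨y, hy, hy0, hyne, hle⟩
      by_contra h
      push_neg at h
      apply hyne
      funext k
      have h1 := hle k
      have h2 := hy0 k
      simp only [Pi.smul_apply, nsmul_eq_mul, Pi.zero_apply] at h1 h2 ⊢
      have hu : uSeq k ≤ 2 := by rw [uSeq_apply]; split <;> norm_num
      have hc : (3:ℤ) ≤ (n:ℤ) := by exact_mod_cast h
      have key : (n:ℤ) * y k - 3 * y k ≥ 0 := by nlinarith [mul_nonneg (by linarith : (0:ℤ) ≤ (n:ℤ)-3) h2]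
      omega
    · intro hn
      refine ⟨fun k => if k = 2 then 1 else 0, ⟨3, fun k hk => by simp [show k ≠ 2 by omega]⟩,
        fun k => by dsimp; split <;> norm_num,
        fun h => by have := congrFun h 2; simp at this,
        fun k => ?_⟩
      simp only [Pi.smul_apply, nsmul_eq_mul]
      have := uSeq_pos k
      by_cases hk : k = 2
      · subst hk
        rw [uSeq_apply]
        simp only [if_pos rfl]
        norm_num
        exact_mod_cast hn
      · simp [hk]
        positivity
  · -- no infimum
    refine ⟨⟨2, fun n hn => by simp [aSeq, show n ≠ 0 by omega, show n ≠ 1 by omega]⟩,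
      ⟨2, fun n hn => by simp [bSeq, show n ≠ 0 by omega, show n ≠ 1 by omega]⟩,
      fun n => by dsimp [aSeq]; split_ifs <;> norm_num,
      fun n => by dsimp [bSeq]; split_ifs <;> norm_num, ?_⟩
    rintro ⟨z, ⟨N, hN⟩, hza, hzb, hglb⟩
    have h0z : (0 : ℕ → ℤ) ≤ z := by
      apply hglb 0 ⟨0, fun n _ => by simp⟩
      · intro n; dsimp [aSeq]; split_ifs <;> norm_num
      · intro n; dsimp [bSeq]; split_ifs <;> norm_num
    have hz0 : z 0 = 0 := by
      have h1 := hzb 0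
      have h2 := h0z 0
      simp [bSeq] at h1
      simp at h2
      omega
    have hz1 : z 1 = 0 := by
      have h1 := hza 1
      have h2 := h0z 1
      simp [aSeq] at h1
      simp at h2
      omega
    set k := max N 2 with hk
    have hzk : z k = 0 := by rw [hN k (le_max_left _ _), hz0, hz1]; ring
    -- define w
    set w : ℕ → ℤ := fun n => if 2 ≤ n ∧ n ≤ k then 1 else 0 with hw
    have hwle : w ≤ z := by
      apply hglb
      · refine ⟨k+1, fun n hn => ?_⟩
        simp only [hw]
        rw [if_neg (by omega), if_neg (by omega), if_neg (by omega)]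
        ring
      · intro n
        simp only [hw]
        dsimp [aSeq]
        split_ifs <;> omega
      · intro n
        simp only [hw]
        dsimp [bSeq]
        split_ifs <;> omega
    have := hwle k
    simp only [hw] at this
    rw [if_pos ⟨le_max_right _ _, le_refl _⟩, hzk] at this
    norm_num at this
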